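/- Let a_1, ..., a_n be positive integers with smallest element s and total sum B, where s and B are both even and s > 0, and let M = B/2 − s/2. Then the minimum over all partitions of the multiset {a_1, ..., a_n, −M, −M} into nonempty parts of the sum of squared part sums equals s²/2 if and only if there exists a subset T ⊆ {1, ..., n} with ∑_{i ∈ T} a_i = B/2; otherwise the minimum is strictly greater than s²/2. -/
import Mathlib


open Finset

/-- The ground multiset of the reduction: the positive integers `a 1, ..., a n`
(as real numbers) together with two copies of `-M`. -/
noncomputable def ground {n : ℕ} (a : Fin n → ℤ) (M : ℝ) : Multiset ℝ :=
  (Finset.univ.val.map (fun i => ((a i : ℤ) : ℝ))) + Multiset.replicate 2 (-M)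

/-- `parts` is a partition of the multiset `S` into nonempty parts. -/
def IsPartitionOf (parts : Multiset (Multiset ℝ)) (S : Multiset ℝ) : Prop :=
  parts.sum = S ∧ (0 : Multiset ℝ) ∉ parts

/-- The RONE-CC objective: the sum of the squares of the part sums. -/
noncomputable def roneObj (parts : Multiset (Multiset ℝ)) : ℝ :=
  (parts.map (fun C => C.sum ^ 2)).sum

lemma exists_le_map {α β : Type*} (f : α → β) :
    ∀ (s : Multiset β) (t : Multiset α), s ≤ t.map f → ∃ u ≤ t, s = u.map f := by
  intro s
  induction s using Multiset.induction with
  | empty => exact fun t _ => ⟨0, Multiset.zero_le t, rfl⟩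
  | cons b s ih =>
    intro t h
    have hb : b ∈ t.map f := Multiset.mem_of_le h (Multiset.mem_cons_self b s)
    obtain ⟨x, hx, rfl⟩ := Multiset.mem_map.mp hb
    obtain ⟨t', rfl⟩ := Multiset.exists_cons_of_mem hx
    rw [Multiset.map_cons] at h
    obtain ⟨u, hu, rfl⟩ := ih t' ((Multiset.cons_le_cons_iff _).mp h)
    exact ⟨x ::ₘ u, Multiset.cons_le_cons _ hu, by rw [Multiset.map_cons]⟩

lemma filter_card_sum (p : ℝ → Prop) [DecidablePred p] (parts : Multiset (Multiset ℝ)) :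
    (parts.map (fun C => Multiset.card (C.filter p))).sum
      = Multiset.card ((parts.sum).filter p) := by
  induction parts using Multiset.induction with
  | empty => simp
  | cons C parts ih => simp [Multiset.filter_add, ih]

lemma sum_map_sum (parts : Multiset (Multiset ℝ)) :
    (parts.map Multiset.sum).sum = parts.sum.sum := by
  induction parts using Multiset.induction with
  | empty => simp
  | cons C parts ih => simp [ih]

lemma roneDecomp {n : ℕ} (a : Fin n → ℤ) (s B : ℤ) (M : ℝ)
    (hpos : ∀ i, 0 < a i) (hsmem : ∃ i, a i = s) (hsle : ∀ i, s ≤ a i)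
    (hB : B = ∑ i, a i) (hs : 0 < s)
    (hM : M = (B : ℝ) / 2 - (s : ℝ) / 2)
    (parts : Multiset (Multiset ℝ)) (hp : IsPartitionOf parts (ground a M)) :
    ((s : ℝ) ^ 2 ≤ roneObj parts) ∨
      ∃ T : Finset (Fin n),
        roneObj parts = 2 * ((∑ i ∈ T, (a i : ℝ)) - (B : ℝ) / 2) ^ 2 + (s : ℝ) ^ 2 / 2 := by
  classical
  set f : Fin n → ℝ := fun i => ((a i : ℤ) : ℝ) with hf
  set A : Multiset ℝ := Finset.univ.val.map f with hA
  -- basic numeric facts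
  have hsB : (s : ℝ) ≤ (B : ℝ) := by
    obtain ⟨i0, hi0⟩ := hsmem
    have : s ≤ ∑ i, a i := hi0 ▸ Finset.single_le_sum (f := a) (fun i _ => (hpos i).le)
      (Finset.mem_univ i0)
    exact_mod_cast hB ▸ this
  have hsR : (0 : ℝ) < (s : ℝ) := by exact_mod_cast hs
  have hMnn : 0 ≤ M := by rw [hM]; linarith
  -- sum of A
  have hAsum : A.sum = (B : ℝ) := by
    rw [hA, ← Finset.sum_eq_multiset_sum, hB]
    push_cast
    rfl
  have hgsum : (ground a M).sum = (s : ℝ) := by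
    rw [ground, Multiset.sum_add, Multiset.sum_replicate]
    rw [show (Finset.univ.val.map (fun i => ((a i : ℤ) : ℝ))) = A from rfl, hAsum]
    push_cast
    rw [hM]; ring
  -- membership in ground
  have hmem : ∀ x ∈ ground a M, (∃ i, x = f i) ∨ x = -M := by
    intro x hx
    rcases Multiset.mem_add.mp hx with h | h
    · obtain ⟨i, _, rfl⟩ := Multiset.mem_map.mp h
      exact Or.inl ⟨i, rfl⟩
    · exact Or.inr (Multiset.eq_of_mem_replicate h)
  have hfi : ∀ i, (s : ℝ) ≤ f i := by
    intro i; simp only [hf]; exact_mod_cast hsle i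
  have hmem_nonpos : ∀ x ∈ ground a M, x ≤ 0 → x = -M := by
    intro x hx hx0
    rcases hmem x hx with ⟨i, rfl⟩ | h
    · exact absurd hx0 (by nlinarith [hfi i])
    · exact h
  have hmem_pos : ∀ x ∈ ground a M, ¬x ≤ 0 → (s : ℝ) ≤ x := by
    intro x hx hx0
    rcases hmem x hx with ⟨i, rfl⟩ | rfl
    · exact hfi i
    · exact absurd (by linarith : -M ≤ 0) hx0
  set p : ℝ → Prop := fun x => x ≤ 0 with hpdef
  have hgf : (ground a M).filter p = Multiset.replicate 2 (-M) := by
    rw [ground, Multiset.filter_add]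
    rw [Multiset.filter_eq_nil.mpr, Multiset.filter_eq_self.mpr, zero_add]
    · intro x hx
      have := Multiset.eq_of_mem_replicate hx
      subst this; show -M ≤ 0; linarith
    · intro x hx
      obtain ⟨i, _, rfl⟩ := Multiset.mem_map.mp hx
      show ¬ f i ≤ 0
      nlinarith [hfi i]
  have hgfn : (ground a M).filter (fun x => ¬ p x) = A := by
    have h1 : A.filter (fun x => ¬ p x) = A := by
      apply Multiset.filter_eq_self.mpr
      intro x hx
      obtain ⟨i, _, rfl⟩ := Multiset.mem_map.mp hx
      show ¬ f i ≤ 0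
      nlinarith [hfi i]
    have h2 : (Multiset.replicate 2 (-M)).filter (fun x => ¬ p x) = 0 := by
      apply Multiset.filter_eq_nil.mpr
      intro x hx
      have := Multiset.eq_of_mem_replicate hx
      subst this; show ¬¬ (-M ≤ 0); intro h; exact h (by linarith)
    rw [ground, Multiset.filter_add, h1, h2, add_zero]
  have hCle : ∀ C ∈ parts, C ≤ ground a M := by
    intro C hC
    exact hp.1 ▸ Multiset.le_sum_of_mem hC
  set g : Multiset ℝ → ℕ := fun C => Multiset.card (C.filter p) with hg
  have hgsum2 : (parts.map g).sum = 2 := by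
    rw [hg]
    rw [filter_card_sum p parts, hp.1, hgf, Multiset.card_replicate]
  -- all parts sum to s
  have hpsum : (parts.map Multiset.sum).sum = (s : ℝ) := by
    rw [sum_map_sum, hp.1, hgsum]
  by_cases hQ : ∃ C ∈ parts, g C = 0
  · -- some part has no nonpositive element: objective ≥ s²
    left
    obtain ⟨C, hC, hg0⟩ := hQ
    have hCne : C ≠ 0 := fun h => hp.2 (h ▸ hC)
    have hfilt : C.filter p = 0 := Multiset.card_eq_zero.mp hg0
    have hallpos : ∀ x ∈ C, (s : ℝ) ≤ x := by
      intro x hx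
      have hnp : ¬ p x := by
        intro hpx
        have : x ∈ C.filter p := Multiset.mem_filter.mpr ⟨hx, hpx⟩
        rw [hfilt] at this; exact absurd this (Multiset.notMem_zero x)
      exact hmem_pos x (Multiset.mem_of_le (hCle C hC) hx) hnp
    obtain ⟨x0, hx0⟩ := Multiset.exists_mem_of_ne_zero hCne
    have hx0s : (s : ℝ) ≤ x0 := hallpos x0 hx0
    have hCsum : (s : ℝ) ≤ C.sum := by
      have := Multiset.single_le_sum (fun x hx => le_trans hsR.le (hallpos x hx)) x0 hx0
      linarith
    have hCsq : (s : ℝ) ^ 2 ≤ C.sum ^ 2 := by nlinarith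
    have hmm : C.sum ^ 2 ∈ parts.map (fun C => C.sum ^ 2) :=
      Multiset.mem_map_of_mem _ hC
    have := Multiset.single_le_sum (fun x hx => ?_) _ hmm
    · rw [roneObj]; linarith
    · obtain ⟨D, _, rfl⟩ := Multiset.mem_map.mp hx
      positivity
  · -- every part has a nonpositive element
    push_neg at hQ
    have hone : ∀ C ∈ parts, 1 ≤ g C := fun C hC => Nat.one_le_iff_ne_zero.mpr (hQ C hC)
    have hcard2 : Multiset.card parts ≤ 2 := by
      have h1 : Multiset.card (parts.map g) • 1 ≤ (parts.map g).sum :=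
        Multiset.card_nsmul_le_sum (by
          intro x hx
          obtain ⟨C, hC, rfl⟩ := Multiset.mem_map.mp hx
          exact hone C hC)
      rw [hgsum2] at h1
      simpa using h1
    have hne : parts ≠ 0 := by
      intro h
      rw [h] at hgsum2
      simp at hgsum2
    have hcard1 : 1 ≤ Multiset.card parts := by
      rcases Nat.eq_zero_or_pos (Multiset.card parts) with h | h
      · exact absurd (Multiset.card_eq_zero.mp h) hne
      · exact h
    interval_cases hcc : Multiset.card parts
    · -- one part
      left
      obtain ⟨C, rfl⟩ := Multiset.card_eq_one.mp hcc
      have : C.sum = (s : ℝ) := by simpa using hpsum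
      rw [roneObj]; simp [this]
    · -- two parts
      right
      obtain ⟨C₁, C₂, rfl⟩ := Multiset.card_eq_two.mp hcc
      have hC₁ : C₁ ∈ ({C₁, C₂} : Multiset (Multiset ℝ)) := by simp
      have hC₂ : C₂ ∈ ({C₁, C₂} : Multiset (Multiset ℝ)) := by simp
      have hsum12 : C₁.sum + C₂.sum = (s : ℝ) := by
        simpa using hpsum
      have hg12 : g C₁ + g C₂ = 2 := by simpa using hgsum2
      have hg1 : g C₁ = 1 := by
        have := hone C₁ hC₁; have := hone C₂ hC₂; omega
      -- decompose C₁
      have hC1filt : C₁.filter p = Multiset.replicate (g C₁) (-M) := by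
        rw [Multiset.eq_replicate]
        refine ⟨rfl, fun x hx => ?_⟩
        have hx' := Multiset.mem_filter.mp hx
        exact hmem_nonpos x (Multiset.mem_of_le (hCle C₁ hC₁) hx'.1) hx'.2
      have hC1pos : C₁.filter (fun x => ¬ p x) ≤ A := by
        have := Multiset.filter_le_filter (fun x => ¬ p x) (hCle C₁ hC₁)
        rwa [hgfn] at this
      obtain ⟨u, hu, huf⟩ := exists_le_map f _ _ (hA ▸ hC1pos)
      have hund : u.Nodup := Multiset.nodup_of_le hu Finset.univ.nodup
      set T : Finset (Fin n) := ⟨u, hund⟩ with hT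
      have hTsum : (C₁.filter (fun x => ¬ p x)).sum = ∑ i ∈ T, f i := by
        rw [huf, Finset.sum_eq_multiset_sum]
      have hC1sum : C₁.sum = (∑ i ∈ T, (a i : ℝ)) - M := by
        have hsplit := Multiset.filter_add_not p C₁
        have : (C₁.filter p).sum + (C₁.filter (fun x => ¬ p x)).sum = C₁.sum := by
          rw [← Multiset.sum_add, hsplit]
        rw [hC1filt, hg1, Multiset.sum_replicate, one_smul, hTsum] at this
        rw [← this]
        simp [hf]
        ring
      refine ⟨T, ?_⟩
      have hobj : roneObj {C₁, C₂} = C₁.sum ^ 2 + C₂.sum ^ 2 := by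
        rw [roneObj]; simp
      have hC2sum : C₂.sum = (s : ℝ) - C₁.sum := by linarith
      rw [hobj, hC1sum, hC2sum, hC1sum, hM]
      ring

/-- The minimum RONE-CC objective over all partitions of `{a 1, ..., a n, -M, -M}`
into nonempty parts equals `s²/2` if and only if some subset of the `a i` sums to
`B/2`; otherwise every such partition has objective strictly greater than `s²/2`.
This is the combinatorial core of the reduction from Partition (Theorem 3). -/
theorem roneObj_min_iff_partition {n : ℕ} (a : Fin n → ℤ) (s B : ℤ) (M : ℝ)
    (hpos : ∀ i, 0 < a i) (hsmem : ∃ i, a i = s) (hsle : ∀ i, s ≤ a i)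
    (hB : B = ∑ i, a i) (hseven : Even s) (hBeven : Even B) (hs : 0 < s)
    (hM : M = (B : ℝ) / 2 - (s : ℝ) / 2) :
    (IsLeast {x : ℝ | ∃ parts : Multiset (Multiset ℝ),
        IsPartitionOf parts (ground a M) ∧ x = roneObj parts} ((s : ℝ) ^ 2 / 2) ↔
      ∃ T : Finset (Fin n), ∑ i ∈ T, a i = B / 2) ∧
    (¬(∃ T : Finset (Fin n), ∑ i ∈ T, a i = B / 2) →
      ∀ parts : Multiset (Multiset ℝ),
        IsPartitionOf parts (ground a M) → (s : ℝ) ^ 2 / 2 < roneObj parts) := by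
  classical
  have hsR : (0 : ℝ) < (s : ℝ) := by exact_mod_cast hs
  have hs2 : (0 : ℝ) < (s : ℝ) ^ 2 := by positivity
  have hB2 : ((B / 2 : ℤ) : ℝ) = (B : ℝ) / 2 := by
    obtain ⟨b, hb⟩ := hBeven
    have h1 : B / 2 = b := by omega
    rw [h1, hb]; push_cast; ring
  -- strictness
  have strict : ¬(∃ T : Finset (Fin n), ∑ i ∈ T, a i = B / 2) →
      ∀ parts : Multiset (Multiset ℝ),
        IsPartitionOf parts (ground a M) → (s : ℝ) ^ 2 / 2 < roneObj parts := by
    intro hno parts hp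
    rcases roneDecomp a s B M hpos hsmem hsle hB hs hM parts hp with h | ⟨T, hT⟩
    · linarith
    · have hne : (∑ i ∈ T, (a i : ℝ)) - (B : ℝ) / 2 ≠ 0 := by
        intro h0
        apply hno
        refine ⟨T, ?_⟩
        have hcast : ((∑ i ∈ T, a i : ℤ) : ℝ) = ((B / 2 : ℤ) : ℝ) := by
          rw [hB2]; push_cast at h0 ⊢; linarith
        exact_mod_cast hcast
      have hpos2 : 0 < ((∑ i ∈ T, (a i : ℝ)) - (B : ℝ) / 2) ^ 2 := by positivity
      rw [hT]; linarith
  -- lower bound (always)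
  have lb : ∀ x ∈ {x : ℝ | ∃ parts : Multiset (Multiset ℝ),
      IsPartitionOf parts (ground a M) ∧ x = roneObj parts}, (s : ℝ) ^ 2 / 2 ≤ x := by
    rintro x ⟨parts, hp, rfl⟩
    rcases roneDecomp a s B M hpos hsmem hsle hB hs hM parts hp with h | ⟨T, hT⟩
    · linarith
    · rw [hT]; nlinarith [sq_nonneg ((∑ i ∈ T, (a i : ℝ)) - (B : ℝ) / 2)]
  refine ⟨⟨fun hle => ?_, fun hT => ?_⟩, strict⟩
  · by_contra hno
    obtain ⟨parts, hp, hx⟩ := hle.1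
    have := strict hno parts hp
    rw [← hx] at this
    exact lt_irrefl _ this
  · obtain ⟨T, hTsum⟩ := hT
    refine ⟨?_, lb⟩
    -- construct the optimal partition
    set f : Fin n → ℝ := fun i => ((a i : ℤ) : ℝ) with hf
    set C₁ : Multiset ℝ := T.val.map f + {-M} with hC₁
    set C₂ : Multiset ℝ := Tᶜ.val.map f + {-M} with hC₂
    have hval : T.val + Tᶜ.val = (Finset.univ : Finset (Fin n)).val := by
      have hdu : T.disjUnion Tᶜ disjoint_compl_right = (Finset.univ : Finset (Fin n)) := by
        rw [Finset.disjUnion_eq_union, Finset.union_compl]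
      calc T.val + Tᶜ.val = (T.disjUnion Tᶜ disjoint_compl_right).val := rfl
        _ = (Finset.univ : Finset (Fin n)).val := by rw [hdu]
    have hTc : ∑ i ∈ Tᶜ, a i = B / 2 := by
      have h := Finset.sum_add_sum_compl T a
      rw [← hB, hTsum] at h
      obtain ⟨b, hb⟩ := hBeven
      have h2 : B - B / 2 = B / 2 := by omega
      linarith
    have hT1 : (T.val.map f).sum = (B : ℝ) / 2 := by
      rw [← Finset.sum_eq_multiset_sum, ← hB2, ← hTsum]
      push_cast
      rfl
    have hT2 : (Tᶜ.val.map f).sum = (B : ℝ) / 2 := by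
      rw [← Finset.sum_eq_multiset_sum, ← hB2, ← hTc]
      push_cast
      rfl
    have hC1sum : C₁.sum = (s : ℝ) / 2 := by
      rw [hC₁, Multiset.sum_add, hT1, Multiset.sum_singleton, hM]; ring
    have hC2sum : C₂.sum = (s : ℝ) / 2 := by
      rw [hC₂, Multiset.sum_add, hT2, Multiset.sum_singleton, hM]; ring
    refine ⟨{C₁, C₂}, ⟨?_, ?_⟩, ?_⟩
    · show ({C₁, C₂} : Multiset (Multiset ℝ)).sum = ground a M
      have h1 : ({C₁, C₂} : Multiset (Multiset ℝ)).sum = C₁ + C₂ := by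
        rw [Multiset.insert_eq_cons, Multiset.sum_cons, Multiset.sum_singleton]
      rw [h1, hC₁, hC₂, ground, add_add_add_comm, ← Multiset.map_add, hval]
      congr 1
    · intro h0
      rw [Multiset.insert_eq_cons] at h0
      simp only [Multiset.mem_cons, Multiset.mem_singleton] at h0
      rcases h0 with h0 | h0
      · apply_fun Multiset.card at h0
        rw [hC₁] at h0
        simp at h0
      · apply_fun Multiset.card at h0
        rw [hC₂] at h0
        simp at h0
    · show (s : ℝ) ^ 2 / 2 = roneObj {C₁, C₂}
      rw [roneObj, Multiset.insert_eq_cons, Multiset.map_cons, Multiset.map_singleton,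
        Multiset.sum_cons, Multiset.sum_singleton, hC1sum, hC2sum]
      ring
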